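/- Let B → K and C → K be ring homomorphisms with C → K surjective and A = B ×_K C. Then the map Spec(B) ⊔ Spec(C) → Spec(A) induced by the two projections is surjective. -/

import Mathlib

/-- For a Ferrand fiber product `A = B ×_K C`, the map
`Spec B ⊔ Spec C → Spec A` is surjective. -/
theorem ferrand_spec_surjective
    (A B C K : Type*) [CommRing A] [CommRing B] [CommRing C] [CommRing K]
    [Algebra A B] [Algebra A C] [Algebra A K] [Algebra B K] [Algebra C K]
    [IsScalarTower A B K] [IsScalarTower A C K]
    (hsurj : Function.Surjective (algebraMap C K))
    (hpull : ∀ (b : B) (c : C), algebraMap B K b = algebraMap C K c →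
      ∃! a : A, algebraMap A B a = b ∧ algebraMap A C a = c) :
    ∀ p : PrimeSpectrum A,
      (∃ q : PrimeSpectrum B, PrimeSpectrum.comap (algebraMap A B) q = p) ∨
      (∃ q : PrimeSpectrum C, PrimeSpectrum.comap (algebraMap A C) q = p) := by
  intro p
  set f := algebraMap A B with hf
  set g := algebraMap A C with hg
  by_cases hker : RingHom.ker f ≤ p.asIdeal
  · -- f is surjective, and p contains its kernel
    left
    have hfs : Function.Surjective f := by
      intro b
      obtain ⟨c, hc⟩ := hsurj (algebraMap B K b)
      obtain ⟨a, ⟨ha1, _⟩, _⟩ := hpull b c hc.symm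
      exact ⟨a, ha1⟩
    refine ⟨⟨p.asIdeal.map f, Ideal.map_isPrime_of_surjective hfs hker⟩, ?_⟩
    apply PrimeSpectrum.ext
    show Ideal.comap f (Ideal.map f p.asIdeal) = p.asIdeal
    rw [Ideal.comap_map_of_surjective f hfs p.asIdeal, ← RingHom.ker_eq_comap_bot,
      sup_eq_left.mpr hker]
  · right
    rw [SetLike.not_le_iff_exists] at hker
    obtain ⟨t, ht0, htp⟩ := hker
    have hft : f t = 0 := ht0
    have hgt0 : algebraMap C K (g t) = 0 := by
      rw [hg, ← IsScalarTower.algebraMap_apply A C K,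
        IsScalarTower.algebraMap_apply A B K, ← hf, hft, map_zero]
    have E : ∀ c : C, ∃! a : A, f a = 0 ∧ g a = g t * c := by
      intro c
      apply hpull 0 (g t * c)
      rw [map_zero, map_mul, hgt0, zero_mul]
    choose h hspec huniq using E
    have hf0 : ∀ c, f (h c) = 0 := fun c => (hspec c).1
    have hgc : ∀ c, g (h c) = g t * c := fun c => (hspec c).2
    have hadd : ∀ c c', h (c + c') = h c + h c' := by
      intro c c'
      refine (huniq (c + c') (h c + h c') ⟨?_, ?_⟩).symm
      · rw [map_add, hf0, hf0, add_zero]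
      · rw [map_add, hgc, hgc, mul_add]
    have hmul : ∀ c c', h c * h c' = t * h (c * c') := by
      intro c c'
      have h1 : h c * h c' = h (g t * (c * c')) := by
        apply huniq
        constructor
        · rw [map_mul, hf0, zero_mul]
        · rw [map_mul, hgc, hgc]; ring
      have h2 : t * h (c * c') = h (g t * (c * c')) := by
        apply huniq
        constructor
        · rw [map_mul, hft, zero_mul]
        · rw [map_mul, hgc]
      rw [h1, h2]
    have hga : ∀ a, h (g a) = t * a := by
      intro a
      refine (huniq (g a) (t * a) ⟨?_, ?_⟩).symm
      · rw [map_mul, hft, zero_mul]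
      · rw [map_mul]
    have h1t : h 1 = t := by
      refine (huniq 1 t ⟨hft, ?_⟩).symm
      rw [mul_one]
    have h00 : h 0 = 0 := by
      refine (huniq 0 0 ⟨?_, ?_⟩).symm
      · rw [map_zero]
      · rw [map_zero, mul_zero]
    have habsorb : ∀ c c', h c' ∈ p.asIdeal → h (c * c') ∈ p.asIdeal := by
      intro c c' hc'
      have : t * h (c * c') ∈ p.asIdeal := by
        rw [← hmul]
        exact Ideal.mul_mem_left _ _ hc'
      rcases p.isPrime.mem_or_mem this with h | h
      · exact absurd h htp
      · exact h
    let q : Ideal C :=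
      { carrier := {c | h c ∈ p.asIdeal}
        add_mem' := fun {a b} ha hb => by
          show h (a + b) ∈ p.asIdeal
          rw [hadd]; exact Ideal.add_mem _ ha hb
        zero_mem' := by show h 0 ∈ p.asIdeal; rw [h00]; exact Ideal.zero_mem _
        smul_mem' := fun c c' hc' => by
          show h (c * c') ∈ p.asIdeal
          exact habsorb c c' hc' }
    have hqprime : q.IsPrime := by
      constructor
      · intro hq
        have : h 1 ∈ p.asIdeal := by
          have := hq ▸ Submodule.mem_top (R := C) (x := (1 : C))
          exact this
        rw [h1t] at this
        exact htp this
      · intro x y hxy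
        have hxy' : h (x * y) ∈ p.asIdeal := hxy
        have : h x * h y ∈ p.asIdeal := by
          rw [hmul]
          exact Ideal.mul_mem_left _ _ hxy'
        exact p.isPrime.mem_or_mem this
    refine ⟨⟨q, hqprime⟩, ?_⟩
    apply PrimeSpectrum.ext
    show Ideal.comap g q = p.asIdeal
    ext a
    simp only [Ideal.mem_comap]
    constructor
    · intro ha
      have : h (g a) ∈ p.asIdeal := ha
      rw [hga] at this
      rcases p.isPrime.mem_or_mem this with h | h
      · exact absurd h htp
      · exact h
    · intro ha
      show h (g a) ∈ p.asIdeal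
      rw [hga]
      exact Ideal.mul_mem_left _ _ ha
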